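/- Let 1 < p < q < 2 and let q' = q/(q-1). There exists a constant C > 0 such that for every n ∈ ℕ and every finite family f_1, …, f_n ∈ Exp L^{q'} of measurable functions on [0,1], one has sup_{t>0} t · (#{k ∈ {1,…,n} : ‖f_k‖_{L^p[0,1]} > t})^{1/q} ≤ C · max_{ε ∈ {-1,1}^n} ‖Σ_{k=1}^n ε_k f_k‖_{Exp L^{q'}}. (That is, the inclusion Exp L^{q'} ⊂ L^p is (ℓ^{q,∞},1)-absolutely summing.) -/

import Mathlib

open MeasureTheory
open scoped ENNReal

/-- Lebesgue measure restricted to `[0,1]`. -/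
noncomputable def mu01 : Measure ℝ := volume.restrict (Set.Icc 0 1)

/-- The weight `W_p(t) = (log(e/t))^{1-p}` for `t ∈ (0,1]`, `W_p(0)=0`. -/
noncomputable def Wp (p t : ℝ) : ℝ :=
  if t = 0 then 0 else Real.log (Real.exp 1 / t) ^ (1 - p)

/-- The norm of the Lorentz space `X_p` on `[0,1]`:
`‖f‖_{X_p} = (∫_0^∞ W_p(μ{s ∈ [0,1] : |f s|^p > λ}) dλ)^{1/p}`. -/
noncomputable def XpNorm (p : ℝ) (f : ℝ → ℝ) : ℝ≥0∞ :=
  (∫⁻ lam in Set.Ioi (0 : ℝ),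
      ENNReal.ofReal
        (Wp p (volume {s : ℝ | s ∈ Set.Icc (0 : ℝ) 1 ∧ lam < |f s| ^ p}).toReal)) ^ (1 / p)

/-- Luxemburg norm of the exponential Orlicz space `Exp L^α` on `[0,1]`. -/
noncomputable def expLNorm (α : ℝ) (f : ℝ → ℝ) : ℝ≥0∞ :=
  ⨅ (lam : ℝ) (_ : 0 < lam ∧
      ∫⁻ t, ENNReal.ofReal (Real.exp ((|f t| / lam) ^ α) - 1) ∂mu01 ≤ 1),
    ENNReal.ofReal lam

/-- Weak `ℓ^q` quasinorm of a finite family of reals. -/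
noncomputable def weakLq (q : ℝ) {n : ℕ} (a : Fin n → ℝ) : ℝ :=
  ⨆ t : Set.Ioi (0 : ℝ), t.1 * (Nat.card {k : Fin n // t.1 < |a k|} : ℝ) ^ (1 / q)

/-- Weak `ℓ^q` quasinorm of a sequence with values in `[0,∞]`, cardinalities
taken via the counting measure on `ℕ`. -/
noncomputable def weakLqSeq (q : ℝ) (a : ℕ → ℝ≥0∞) : ℝ≥0∞ :=
  ⨆ t : Set.Ioi (0 : ℝ),
    ENNReal.ofReal t.1 * Measure.count {k : ℕ | ENNReal.ofReal t.1 < a k} ^ (1 / q)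

/-- Peetre `K`-functional for the couple `(L^1[0,1], L^∞[0,1])`. -/
noncomputable def Kfun (τ : ℝ) (f : ℝ → ℝ) : ℝ≥0∞ :=
  ⨅ (g : ℝ → ℝ) (h : ℝ → ℝ) (_ : f = g + h),
    eLpNorm g 1 mu01 + ENNReal.ofReal τ * eLpNorm h ⊤ mu01

/-- The Rademacher functions `r_k(t) = sgn(sin(2^k π t))`. -/
noncomputable def rademacher (k : ℕ) (t : ℝ) : ℝ :=
  Real.sign (Real.sin (2 ^ k * Real.pi * t))

/-- Marcinkiewicz space norm `‖f‖_{M_φ} = sup_{0<t≤1} (φ(t)/t) K(t,f;L^1,L^∞)`. -/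
noncomputable def MNorm (φ : ℝ → ℝ) (f : ℝ → ℝ) : ℝ≥0∞ :=
  ⨆ t : {t : ℝ // 0 < t ∧ t ≤ 1}, ENNReal.ofReal (φ t.1 / t.1) * Kfun t.1 f



/-- Signed sum of a finite family of reals according to a boolean sign pattern. -/
noncomputable def sgnSum {n : ℕ} (a : Fin n → ℝ) (ε : Fin n → Bool) : ℝ :=
  ∑ k, (if ε k then a k else -(a k))

lemma flip_involutive {n : ℕ} (i : Fin n) :
    Function.Involutive (fun ε : Fin n → Bool => Function.update ε i (!(ε i))) := by
  intro ε
  funext k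
  by_cases hk : k = i
  · subst hk; simp [Function.update]
  · simp [Function.update, hk]

lemma sgnSum_update {n : ℕ} (a : Fin n → ℝ) (ε : Fin n → Bool) (i : Fin n) :
    sgnSum a ε = sgnSum (Function.update a i 0) ε + (if ε i then a i else -(a i)) := by
  classical
  have h1 : (fun k => if ε k then a k else -(a k)) =
      Function.update (fun k => if ε k then Function.update a i 0 k else
        -(Function.update a i 0 k)) i (if ε i then a i else -(a i)) := by
    funext k
    by_cases hk : k = i
    · subst hk; simp
    · simp [Function.update_of_ne hk]
  have h2 : sgnSum a ε = (if ε i then a i else -(a i)) +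
      ∑ k ∈ Finset.univ \ {i}, (if ε k then Function.update a i 0 k else
        -(Function.update a i 0 k)) := by
    rw [sgnSum]
    rw [show (∑ k, (if ε k then a k else -(a k))) = _ from congrArg (Finset.univ.sum) h1]
    exact Finset.sum_update_of_mem (Finset.mem_univ i) _ _
  have h3 : sgnSum (Function.update a i 0) ε =
      (if ε i then Function.update a i 0 i else -(Function.update a i 0 i)) +
      ∑ k ∈ Finset.univ \ {i}, (if ε k then Function.update a i 0 k else
        -(Function.update a i 0 k)) := by
    rw [sgnSum]
    exact Finset.sum_eq_add_sum_sdiff_singleton_of_mem (Finset.mem_univ i) _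
  have h4 : (if ε i then Function.update a i 0 i else -(Function.update a i 0 i)) = 0 := by
    simp
  rw [h2, h3, h4]; ring

lemma sgnSum_flip {n : ℕ} (a : Fin n → ℝ) (ε : Fin n → Bool) (i : Fin n) :
    sgnSum a (Function.update ε i (!(ε i))) =
      sgnSum (Function.update a i 0) ε - (if ε i then a i else -(a i)) := by
  classical
  rw [sgnSum_update a (Function.update ε i (!(ε i))) i]
  have h1 : sgnSum (Function.update a i 0) (Function.update ε i (!(ε i))) =
      sgnSum (Function.update a i 0) ε := by
    unfold sgnSum
    apply Finset.sum_congr rfl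
    intro k _
    by_cases hk : k = i
    · subst hk; simp
    · rw [Function.update_of_ne hk]
  have h2 : (if Function.update ε i (!(ε i)) i then a i else -(a i)) =
      -(if ε i then a i else -(a i)) := by
    simp only [Function.update_self]
    cases h : ε i <;> simp
  rw [h1, h2]; ring

/-- Core combinatorial lemma: the average of `(|signed sum| + c)^r` over all sign patterns
is at least `2^{-|S|} ((∑_{k∈S} |a k|) + c)^r`. -/
lemma comb {n : ℕ} (r : ℕ) (S : Finset (Fin n)) :
    ∀ (a : Fin n → ℝ) (c : ℝ), 0 ≤ c →
      (2:ℝ)^n * ((∑ k ∈ S, |a k|) + c)^r ≤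
        2^S.card * ∑ ε : Fin n → Bool, (|sgnSum a ε| + c)^r := by
  classical
  induction S using Finset.induction_on with
  | empty =>
      intro a c hc
      simp only [Finset.sum_empty, Finset.card_empty, pow_zero, one_mul, zero_add]
      have hterm : ∀ ε : Fin n → Bool, c^r ≤ (|sgnSum a ε| + c)^r := by
        intro ε
        exact pow_le_pow_left₀ hc (le_add_of_nonneg_left (abs_nonneg _)) r
      calc (2:ℝ)^n * c^r = ∑ _ε : Fin n → Bool, c^r := by
              rw [Finset.sum_const, Finset.card_univ, Fintype.card_fun]
              simp [nsmul_eq_mul]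
        _ ≤ ∑ ε : Fin n → Bool, (|sgnSum a ε| + c)^r := Finset.sum_le_sum fun ε _ => hterm ε
  | @insert i S₀ hi ih =>
      intro a c hc
      set a' := Function.update a i 0 with ha'
      have hsum_ins : ∑ k ∈ insert i S₀, |a k| = |a i| + ∑ k ∈ S₀, |a k| :=
        Finset.sum_insert hi
      have hsum_a' : ∑ k ∈ S₀, |a' k| = ∑ k ∈ S₀, |a k| := by
        apply Finset.sum_congr rfl
        intro k hk
        have : k ≠ i := fun h => hi (h ▸ hk)
        rw [ha', Function.update_of_ne this]
      -- pointwise inequality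
      have hpoint : ∀ ε : Fin n → Bool,
          (|sgnSum a' ε| + (|a i| + c))^r ≤
            (|sgnSum a ε| + c)^r + (|sgnSum a (Function.update ε i (!(ε i)))| + c)^r := by
        intro ε
        set Y := sgnSum a' ε
        set d := (if ε i then a i else -(a i)) with hd
        have habs : |d| = |a i| := by rw [hd]; cases h : ε i <;> simp
        have h1 : sgnSum a ε = Y + d := by rw [sgnSum_update a ε i]
        have h2 : sgnSum a (Function.update ε i (!(ε i))) = Y - d := sgnSum_flip a ε i
        have key : |Y| + |d| + c ≤ |Y + d| + c ∨ |Y| + |d| + c ≤ |Y - d| + c := by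
          rcases le_total 0 Y with hY | hY <;> rcases le_total 0 d with hdd | hdd
          · left
            rw [abs_of_nonneg hY, abs_of_nonneg hdd, abs_of_nonneg (add_nonneg hY hdd)]
          · right
            rw [abs_of_nonneg hY, abs_of_nonpos hdd, abs_of_nonneg (by linarith)]
            linarith
          · right
            rw [abs_of_nonpos hY, abs_of_nonneg hdd, abs_of_nonpos (by linarith)]
            linarith
          · left
            rw [abs_of_nonpos hY, abs_of_nonpos hdd, abs_of_nonpos (by linarith)]
            linarith
        have hbase : (0:ℝ) ≤ |Y| + (|a i| + c) := by positivity
        rcases key with h | h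
        · have := pow_le_pow_left₀ hbase (by rw [← habs]; linarith : |Y| + (|a i| + c) ≤ |Y + d| + c) r
          have hnn : (0:ℝ) ≤ (|Y - d| + c)^r := by positivity
          rw [h1, h2]; linarith
        · have := pow_le_pow_left₀ hbase (by rw [← habs]; linarith : |Y| + (|a i| + c) ≤ |Y - d| + c) r
          have hnn : (0:ℝ) ≤ (|Y + d| + c)^r := by positivity
          rw [h1, h2]; linarith
      -- flip sum identity
      have hflip : ∑ ε : Fin n → Bool, (|sgnSum a (Function.update ε i (!(ε i)))| + c)^r
          = ∑ ε : Fin n → Bool, (|sgnSum a ε| + c)^r := by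
        exact Equiv.sum_comp ((flip_involutive i).toPerm _) (fun ε => (|sgnSum a ε| + c)^r)
      have hIH := ih a' (|a i| + c) (by positivity)
      have hstep : ∑ ε : Fin n → Bool, (|sgnSum a' ε| + (|a i| + c))^r ≤
          2 * ∑ ε : Fin n → Bool, (|sgnSum a ε| + c)^r := by
        calc ∑ ε : Fin n → Bool, (|sgnSum a' ε| + (|a i| + c))^r
            ≤ ∑ ε : Fin n → Bool, ((|sgnSum a ε| + c)^r +
                (|sgnSum a (Function.update ε i (!(ε i)))| + c)^r) :=
              Finset.sum_le_sum fun ε _ => hpoint ε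
          _ = 2 * ∑ ε : Fin n → Bool, (|sgnSum a ε| + c)^r := by
              rw [Finset.sum_add_distrib, hflip]; ring
      rw [Finset.card_insert_of_notMem hi, hsum_ins]
      calc (2:ℝ)^n * (|a i| + (∑ k ∈ S₀, |a k|) + c)^r
          = (2:ℝ)^n * ((∑ k ∈ S₀, |a' k|) + (|a i| + c))^r := by
            rw [hsum_a']; ring_nf
        _ ≤ 2^S₀.card * ∑ ε : Fin n → Bool, (|sgnSum a' ε| + (|a i| + c))^r := hIH
        _ ≤ 2^S₀.card * (2 * ∑ ε : Fin n → Bool, (|sgnSum a ε| + c)^r) := by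
            apply mul_le_mul_of_nonneg_left hstep (by positivity)
        _ = 2^(S₀.card + 1) * ∑ ε : Fin n → Bool, (|sgnSum a ε| + c)^r := by ring


/-- `s^β ≤ β^β * exp s` for `s ≥ 0`, `β > 0`. -/
lemma rpow_le_rpow_mul_exp {s β : ℝ} (hs : 0 ≤ s) (hβ : 0 < β) :
    s ^ β ≤ β ^ β * Real.exp s := by
  rcases eq_or_lt_of_le hs with h | h
  · rw [← h, Real.zero_rpow (ne_of_gt hβ)]
    positivity
  · rw [Real.rpow_def_of_pos h, Real.rpow_def_of_pos hβ, ← Real.exp_add]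
    apply Real.exp_le_exp.2
    have hlog := Real.log_le_sub_one_of_pos (div_pos h hβ)
    have : Real.log (s / β) = Real.log s - Real.log β := Real.log_div (ne_of_gt h) (ne_of_gt hβ)
    rw [this] at hlog
    have hβs : β * (Real.log s - Real.log β) ≤ s - β := by
      have := mul_le_mul_of_nonneg_left hlog (le_of_lt hβ)
      calc β * (Real.log s - Real.log β) ≤ β * (s / β - 1) := this
        _ = s - β := by field_simp
    nlinarith [hβ.le]

/-- Bernoulli-type: for `0 ≤ x ≤ 1`, `0 ≤ s ≤ 1` : `(1-x)^s ≤ 1 - s*x`. -/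
lemma rpow_one_sub_le {x s : ℝ} (hx0 : 0 ≤ x) (hx1 : x ≤ 1) (hs0 : 0 ≤ s) (hs1 : s ≤ 1) :
    (1 - x) ^ s ≤ 1 - s * x := by
  have := Real.geom_mean_le_arith_mean2_weighted hs0 (by linarith : (0:ℝ) ≤ 1 - s)
    (by linarith : (0:ℝ) ≤ 1 - x) (by norm_num : (0:ℝ) ≤ 1) (by ring)
  rw [Real.one_rpow, mul_one] at this
  calc (1-x)^s ≤ s * (1-x) + (1-s) * 1 := this
    _ = 1 - s * x := by ring

/-- Partial sums of `j^{-θ}`, `0 < θ < 1`. -/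
lemma sum_rpow_neg_le {θ : ℝ} (hθ0 : 0 < θ) (hθ1 : θ < 1) (m : ℕ) (hm : 1 ≤ m) :
    ∑ j ∈ Finset.Icc 1 m, ((j:ℝ)) ^ (-θ) ≤ (1/(1-θ)) * (m:ℝ) ^ (1-θ) := by
  induction m with
  | zero => omega
  | succ m ih =>
      rcases Nat.eq_or_lt_of_le hm with h | h
      · -- m+1 = 1
        have : m = 0 := by omega
        subst this
        simp only [Finset.Icc_self, Finset.sum_singleton, Nat.cast_one, Real.one_rpow,
          Nat.cast_ofNat]
        have h1θ : (0:ℝ) < 1 - θ := by linarith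
        push_cast
        rw [Real.one_rpow, mul_one, le_div_iff₀ h1θ, one_mul]
        linarith
      · have hm1 : 1 ≤ m := by omega
        have ihm := ih hm1
        have hmpos : (0:ℝ) < m := by exact_mod_cast hm1
        have hm1pos : (0:ℝ) < (m:ℝ) + 1 := by linarith
        have hsplit : ∑ j ∈ Finset.Icc 1 (m+1), ((j:ℝ)) ^ (-θ)
            = (∑ j ∈ Finset.Icc 1 m, ((j:ℝ)) ^ (-θ)) + ((m+1:ℕ):ℝ) ^ (-θ) := by
          rw [← Finset.sum_Icc_succ_top (by omega : 1 ≤ m + 1)]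
        -- key: (1-θ) * (m+1)^(-θ) ≤ (m+1)^(1-θ) - m^(1-θ)
        have hbern : ((m:ℝ)/((m:ℝ)+1)) ^ (1-θ) ≤ 1 - (1-θ)/((m:ℝ)+1) := by
          have h1 : (m:ℝ)/((m:ℝ)+1) = 1 - 1/((m:ℝ)+1) := by field_simp; ring
          rw [h1]
          have := rpow_one_sub_le (x := 1/((m:ℝ)+1)) (s := 1-θ)
            (by positivity) (by rw [div_le_one hm1pos]; linarith)
            (by linarith) (by linarith)
          calc (1 - 1/((m:ℝ)+1)) ^ (1-θ) ≤ 1 - (1-θ) * (1/((m:ℝ)+1)) := this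
            _ = 1 - (1-θ)/((m:ℝ)+1) := by ring
        have hmeq : (m:ℝ) ^ (1-θ) = ((m:ℝ)+1) ^ (1-θ) * ((m:ℝ)/((m:ℝ)+1)) ^ (1-θ) := by
          rw [← Real.mul_rpow (le_of_lt hm1pos) (by positivity)]
          congr 1
          field_simp
        have hpow_div : ((m:ℝ)+1) ^ (1-θ) / ((m:ℝ)+1) = ((m:ℝ)+1) ^ (-θ) := by
          rw [eq_comm, eq_div_iff (ne_of_gt hm1pos)]
          nth_rewrite 2 [← Real.rpow_one ((m:ℝ)+1)]
          rw [← Real.rpow_add hm1pos]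
          ring_nf
        have hkey : (1-θ) * ((m:ℝ)+1) ^ (-θ) ≤ ((m:ℝ)+1) ^ (1-θ) - (m:ℝ) ^ (1-θ) := by
          have h2 : (m:ℝ) ^ (1-θ) ≤ ((m:ℝ)+1) ^ (1-θ) * (1 - (1-θ)/((m:ℝ)+1)) := by
            rw [hmeq]
            apply mul_le_mul_of_nonneg_left hbern (by positivity)
          have h3 : ((m:ℝ)+1) ^ (1-θ) * (1 - (1-θ)/((m:ℝ)+1))
              = ((m:ℝ)+1) ^ (1-θ) - (1-θ) * (((m:ℝ)+1) ^ (1-θ) / ((m:ℝ)+1)) := by ring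
          rw [h3, hpow_div] at h2
          linarith
        rw [hsplit]
        push_cast
        have h1θ : (0:ℝ) < 1 - θ := by linarith
        calc (∑ j ∈ Finset.Icc 1 m, ((j:ℝ)) ^ (-θ)) + ((m:ℝ)+1) ^ (-θ)
            ≤ (1/(1-θ)) * (m:ℝ) ^ (1-θ) + (1/(1-θ)) * ((1-θ) * ((m:ℝ)+1) ^ (-θ)) := by
              have : (1/(1-θ)) * ((1-θ) * ((m:ℝ)+1) ^ (-θ)) = ((m:ℝ)+1) ^ (-θ) := by
                field_simp
              rw [this]
              exact add_le_add ihm (le_refl _)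
          _ ≤ (1/(1-θ)) * (m:ℝ) ^ (1-θ) + (1/(1-θ)) * (((m:ℝ)+1) ^ (1-θ) - (m:ℝ) ^ (1-θ)) := by
              apply add_le_add_right
              apply mul_le_mul_of_nonneg_left hkey (by positivity)
          _ = (1/(1-θ)) * ((m:ℝ)+1) ^ (1-θ) := by ring



instance : IsProbabilityMeasure mu01 := by
  constructor
  rw [mu01, Measure.restrict_apply_univ, Real.volume_Icc]
  norm_num

/-- If the Luxemburg norm is `< λ` then `λ` satisfies the modular condition. -/
lemma expLNorm_valid {α lam : ℝ} {f : ℝ → ℝ} (hα : 0 ≤ α) (hlam : 0 < lam)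
    (h : expLNorm α f < ENNReal.ofReal lam) :
    ∫⁻ t, ENNReal.ofReal (Real.exp ((|f t| / lam) ^ α) - 1) ∂mu01 ≤ 1 := by
  rw [expLNorm] at h
  rw [iInf_lt_iff] at h
  obtain ⟨lam₀, h⟩ := h
  rw [iInf_lt_iff] at h
  obtain ⟨⟨hlam₀, hcond⟩, hlt⟩ := h
  have hle : lam₀ ≤ lam := le_of_lt ((ENNReal.ofReal_lt_ofReal_iff hlam).1 hlt)
  refine le_trans (lintegral_mono fun t => ?_) hcond
  apply ENNReal.ofReal_le_ofReal
  have h1 : |f t| / lam ≤ |f t| / lam₀ := by gcongr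
  have h2 : (|f t| / lam) ^ α ≤ (|f t| / lam₀) ^ α :=
    Real.rpow_le_rpow (by positivity) h1 hα
  simp only [sub_le_sub_iff_right]
  exact Real.exp_le_exp.2 h2

lemma exp_integral_le_two {α lam : ℝ} {f : ℝ → ℝ} (hf : Measurable f)
    (h : ∫⁻ t, ENNReal.ofReal (Real.exp ((|f t| / lam) ^ α) - 1) ∂mu01 ≤ 1) :
    ∫⁻ t, ENNReal.ofReal (Real.exp ((|f t| / lam) ^ α)) ∂mu01 ≤ 2 := by
  have hmeas : Measurable fun t => ENNReal.ofReal (Real.exp ((|f t| / lam) ^ α) - 1) := by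
    apply ENNReal.measurable_ofReal.comp
    apply Measurable.sub _ measurable_const
    exact Real.measurable_exp.comp ((hf.abs.div_const lam).pow_const α)
  calc ∫⁻ t, ENNReal.ofReal (Real.exp ((|f t| / lam) ^ α)) ∂mu01
      ≤ ∫⁻ t, (ENNReal.ofReal (Real.exp ((|f t| / lam) ^ α) - 1) + 1) ∂mu01 := by
        apply lintegral_mono
        intro t
        calc ENNReal.ofReal (Real.exp ((|f t| / lam) ^ α))
            = ENNReal.ofReal ((Real.exp ((|f t| / lam) ^ α) - 1) + 1) := by ring_nf
          _ ≤ ENNReal.ofReal (Real.exp ((|f t| / lam) ^ α) - 1) + ENNReal.ofReal 1 :=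
              ENNReal.ofReal_add_le
          _ = ENNReal.ofReal (Real.exp ((|f t| / lam) ^ α) - 1) + 1 := by
              rw [ENNReal.ofReal_one]
    _ = (∫⁻ t, ENNReal.ofReal (Real.exp ((|f t| / lam) ^ α) - 1) ∂mu01) + 1 := by
        rw [lintegral_add_right _ measurable_const, lintegral_one, measure_univ]
    _ ≤ 1 + 1 := by exact add_le_add_left h 1
    _ = 2 := one_add_one_eq_two

/-- Moment bound from the exponential modular bound. -/
lemma moment_bound {α lam : ℝ} {f : ℝ → ℝ} (hf : Measurable f) (hlam : 0 < lam)
    (hα : 1 ≤ α)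
    (h : ∫⁻ t, ENNReal.ofReal (Real.exp ((|f t| / lam) ^ α)) ∂mu01 ≤ 2) (r : ℕ)
    (hr : 1 ≤ r) :
    ∫⁻ t, (ENNReal.ofReal |f t|) ^ (r:ℝ) ∂mu01 ≤
      ENNReal.ofReal (2 * lam ^ (r:ℝ) * (r:ℝ) ^ ((r:ℝ)/α)) := by
  have hα0 : (0:ℝ) < α := by linarith
  have hrpos : (0:ℝ) < (r:ℝ) := by exact_mod_cast hr
  have hpoint : ∀ t, (ENNReal.ofReal |f t|) ^ (r:ℝ) ≤
      ENNReal.ofReal (lam ^ (r:ℝ) * (r:ℝ) ^ ((r:ℝ)/α)) *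
        ENNReal.ofReal (Real.exp ((|f t| / lam) ^ α)) := by
    intro t
    set u := |f t| / lam with hu
    have hu0 : 0 ≤ u := by positivity
    have hreal : |f t| ^ (r:ℝ) ≤ lam ^ (r:ℝ) * ((r:ℝ) ^ ((r:ℝ)/α) * Real.exp (u ^ α)) := by
      have h1 : |f t| = lam * u := by rw [hu]; field_simp
      have h2 : |f t| ^ (r:ℝ) = lam ^ (r:ℝ) * u ^ (r:ℝ) := by
        rw [h1, Real.mul_rpow (le_of_lt hlam) hu0]
      have h3 : u ^ (r:ℝ) = (u ^ α) ^ ((r:ℝ)/α) := by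
        rw [← Real.rpow_mul hu0]
        congr 1
        field_simp
      have h4 : (u ^ α) ^ ((r:ℝ)/α) ≤ ((r:ℝ)/α) ^ ((r:ℝ)/α) * Real.exp (u ^ α) :=
        rpow_le_rpow_mul_exp (Real.rpow_nonneg hu0 α) (by positivity)
      have h5 : ((r:ℝ)/α) ^ ((r:ℝ)/α) ≤ (r:ℝ) ^ ((r:ℝ)/α) :=
        Real.rpow_le_rpow (by positivity) (div_le_self (le_of_lt hrpos) hα) (by positivity)
      have h6 : u ^ (r:ℝ) ≤ (r:ℝ) ^ ((r:ℝ)/α) * Real.exp (u ^ α) := by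
        rw [h3]
        calc (u ^ α) ^ ((r:ℝ)/α) ≤ ((r:ℝ)/α) ^ ((r:ℝ)/α) * Real.exp (u ^ α) := h4
          _ ≤ (r:ℝ) ^ ((r:ℝ)/α) * Real.exp (u ^ α) := by
              apply mul_le_mul_of_nonneg_right h5 (Real.exp_nonneg _)
      rw [h2]
      apply mul_le_mul_of_nonneg_left h6 (Real.rpow_nonneg (le_of_lt hlam) _)
    calc (ENNReal.ofReal |f t|) ^ (r:ℝ)
        = ENNReal.ofReal (|f t| ^ (r:ℝ)) :=
          ENNReal.ofReal_rpow_of_nonneg (abs_nonneg _) (le_of_lt hrpos)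
      _ ≤ ENNReal.ofReal (lam ^ (r:ℝ) * ((r:ℝ) ^ ((r:ℝ)/α) * Real.exp (u ^ α))) :=
          ENNReal.ofReal_le_ofReal hreal
      _ = ENNReal.ofReal (lam ^ (r:ℝ) * (r:ℝ) ^ ((r:ℝ)/α)) *
            ENNReal.ofReal (Real.exp (u ^ α)) := by
          rw [← ENNReal.ofReal_mul (by positivity)]
          ring_nf
  have hmeas : Measurable fun t => ENNReal.ofReal (Real.exp ((|f t| / lam) ^ α)) :=
    ENNReal.measurable_ofReal.comp
      (Real.measurable_exp.comp ((hf.abs.div_const lam).pow_const α))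
  calc ∫⁻ t, (ENNReal.ofReal |f t|) ^ (r:ℝ) ∂mu01
      ≤ ∫⁻ t, ENNReal.ofReal (lam ^ (r:ℝ) * (r:ℝ) ^ ((r:ℝ)/α)) *
          ENNReal.ofReal (Real.exp ((|f t| / lam) ^ α)) ∂mu01 := lintegral_mono hpoint
    _ = ENNReal.ofReal (lam ^ (r:ℝ) * (r:ℝ) ^ ((r:ℝ)/α)) *
          ∫⁻ t, ENNReal.ofReal (Real.exp ((|f t| / lam) ^ α)) ∂mu01 :=
        lintegral_const_mul _ hmeas
    _ ≤ ENNReal.ofReal (lam ^ (r:ℝ) * (r:ℝ) ^ ((r:ℝ)/α)) * 2 := by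
        apply mul_le_mul_right h
    _ = ENNReal.ofReal (2 * lam ^ (r:ℝ) * (r:ℝ) ^ ((r:ℝ)/α)) := by
        rw [show (2:ℝ≥0∞) = ENNReal.ofReal 2 by norm_num,
          ← ENNReal.ofReal_mul (by positivity)]
        ring_nf

/-- A function with zero Luxemburg norm vanishes a.e. -/
lemma expLNorm_eq_zero_ae {α : ℝ} {f : ℝ → ℝ} (hα : 1 ≤ α) (hf : Measurable f)
    (h0 : expLNorm α f = 0) : f =ᵐ[mu01] 0 := by
  by_contra hne
  have hpos : mu01 {x | f x ≠ 0} ≠ 0 := by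
    intro hz
    exact hne (by rwa [Filter.EventuallyEq, ae_iff])
  have hcover : {x | f x ≠ 0} ⊆ ⋃ j : ℕ, {x | 1/((j:ℝ)+1) < |f x|} := by
    intro x hx
    have : 0 < |f x| := abs_pos.2 hx
    obtain ⟨j, hj⟩ := exists_nat_one_div_lt this
    exact Set.mem_iUnion.2 ⟨j, hj⟩
  have : ∃ j : ℕ, mu01 {x | 1/((j:ℝ)+1) < |f x|} ≠ 0 := by
    by_contra hall
    push_neg at hall
    have : mu01 (⋃ j : ℕ, {x | 1/((j:ℝ)+1) < |f x|}) = 0 :=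
      measure_iUnion_null fun j => hall j
    exact hpos (measure_mono_null hcover this)
  obtain ⟨j, hβ⟩ := this
  set δ : ℝ := 1/((j:ℝ)+1) with hδ
  have hδpos : 0 < δ := by positivity
  set s := {x | δ < |f x|} with hs
  have hsmeas : MeasurableSet s := by
    have : s = (fun x => |f x|) ⁻¹' Set.Ioi δ := rfl
    rw [this]
    exact hf.abs measurableSet_Ioi
  set β := mu01 s with hβdef
  have hβtop : β ≠ ⊤ := by
    apply ne_of_lt
    exact lt_of_le_of_lt prob_le_one (by norm_num)
  set β' := β.toReal with hβ'
  have hβ'pos : 0 < β' := ENNReal.toReal_pos hβ hβtop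
  set L := Real.log (1 + 2/β') with hL
  have hLpos : 0 < L := Real.log_pos (by
    have h2β : 0 < 2/β' := by positivity
    linarith)
  set lam := δ / L ^ (1/α) with hlam
  have hlampos : 0 < lam := by
    apply div_pos hδpos
    exact Real.rpow_pos_of_pos hLpos _
  have hvalid := expLNorm_valid (f := f) (by linarith : (0:ℝ) ≤ α) hlampos
    (by rw [h0]; exact ENNReal.ofReal_pos.2 hlampos)
  -- lower bound the integral
  have hlower : ENNReal.ofReal (2/β') * β ≤
      ∫⁻ t, ENNReal.ofReal (Real.exp ((|f t| / lam) ^ α) - 1) ∂mu01 := by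
    rw [← lintegral_indicator_const hsmeas]
    apply lintegral_mono
    intro x
    by_cases hx : x ∈ s
    · rw [Set.indicator_of_mem hx]
      apply ENNReal.ofReal_le_ofReal
      have h1 : δ / lam ≤ |f x| / lam := by
        gcongr
        exact le_of_lt hx
      have h2 : (δ / lam) ^ α ≤ (|f x| / lam) ^ α :=
        Real.rpow_le_rpow (by positivity) h1 (by linarith)
      have h3 : δ / lam = L ^ (1/α) := by
        rw [hlam, div_div_eq_mul_div, mul_comm, mul_div_assoc, div_self (ne_of_gt hδpos),
          mul_one]
      have h4 : (δ / lam) ^ α = L := by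
        rw [h3, ← Real.rpow_mul (le_of_lt hLpos)]
        rw [one_div, inv_mul_cancel₀ (by linarith : α ≠ 0), Real.rpow_one]
      have h5 : 1 + 2/β' ≤ Real.exp ((|f x| / lam) ^ α) := by
        rw [← Real.exp_log (show (0:ℝ) < 1 + 2/β' by positivity)]
        apply Real.exp_le_exp.2
        rw [← hL, ← h4]
        exact h2
      linarith
    · rw [Set.indicator_of_notMem hx]
      exact zero_le
  have hcontr : ENNReal.ofReal (2/β') * β ≤ 1 := le_trans hlower hvalid
  have hβeq : β = ENNReal.ofReal β' := (ENNReal.ofReal_toReal hβtop).symm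
  rw [hβeq, ← ENNReal.ofReal_mul (by positivity)] at hcontr
  have h2 : 2/β' * β' = 2 := by field_simp
  rw [h2] at hcontr
  norm_num at hcontr


lemma measurable_finset_sup {ι : Type*} (s : Finset ι) (F : ι → ℝ → ℝ≥0∞)
    (h : ∀ i, Measurable (F i)) : Measurable (fun x => s.sup (fun i => F i x)) := by
  classical
  induction s using Finset.induction_on with
  | empty => simpa using measurable_const
  | @insert i s hi ih =>
      simp only [Finset.sup_insert]
      exact Measurable.sup (h i) ih

lemma measurable_finset_inf {ι : Type*} (s : Finset ι) (F : ι → ℝ → ℝ≥0∞)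
    (h : ∀ i, Measurable (F i)) : Measurable (fun x => s.inf (fun i => F i x)) := by
  classical
  induction s using Finset.induction_on with
  | empty => simpa using measurable_const
  | @insert i s hi ih =>
      simp only [Finset.inf_insert]
      exact Measurable.inf (h i) ih

/-- `bfun f A j x` is the `j`-th largest value among `|f k x|`, `k ∈ A`. -/
noncomputable def bfun {n : ℕ} (f : Fin n → ℝ → ℝ) (A : Finset (Fin n)) (j : ℕ) (x : ℝ) :
    ℝ≥0∞ :=
  (A.powersetCard j).sup fun T => T.inf fun k => ENNReal.ofReal |f k x|

lemma bfun_measurable {n : ℕ} (f : Fin n → ℝ → ℝ) (A : Finset (Fin n)) (j : ℕ)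
    (hf : ∀ k, Measurable (f k)) : Measurable (bfun f A j) := by
  apply measurable_finset_sup
  intro T
  apply measurable_finset_inf
  intro k
  exact ENNReal.measurable_ofReal.comp (hf k).abs

lemma bfun_ne_top {n : ℕ} {f : Fin n → ℝ → ℝ} {A : Finset (Fin n)} {j : ℕ} (hj : 1 ≤ j)
    (x : ℝ) : bfun f A j x ≠ ⊤ := by
  rw [bfun, ← lt_top_iff_ne_top, Finset.sup_lt_iff (by simp : (⊥:ℝ≥0∞) < ⊤)]
  intro T hT
  rw [Finset.mem_powersetCard] at hT
  have hTne : T.Nonempty := Finset.card_pos.1 (by omega)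
  obtain ⟨k, hk⟩ := hTne
  exact lt_of_le_of_lt (Finset.inf_le hk) ENNReal.ofReal_lt_top

lemma bfun_attained {n : ℕ} {f : Fin n → ℝ → ℝ} {A : Finset (Fin n)} {j : ℕ}
    (hj : 1 ≤ j) (hjm : j ≤ A.card) (x : ℝ) :
    ∃ T, T ⊆ A ∧ T.card = j ∧ ∀ k ∈ T, bfun f A j x ≤ ENNReal.ofReal |f k x| := by
  have hne : (A.powersetCard j).Nonempty := Finset.powersetCard_nonempty.2 hjm
  obtain ⟨T, hT, heq⟩ := Finset.exists_mem_eq_sup (A.powersetCard j) hne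
    (fun T => T.inf fun k => ENNReal.ofReal |f k x|)
  rw [Finset.mem_powersetCard] at hT
  exact ⟨T, hT.1, hT.2, fun k hk => by
    rw [bfun, heq]; exact Finset.inf_le hk⟩

/-- Rank-injection: the sum of a monotone function of the values is at most the sum over
the order statistics. -/
lemma sum_le_sum_orderstat {n : ℕ} (A : Finset (Fin n)) (w : Fin n → ℝ≥0∞)
    (φ : ℝ≥0∞ → ℝ≥0∞) (hφ : Monotone φ) :
    ∑ k ∈ A, φ (w k) ≤
      ∑ j ∈ Finset.Icc 1 A.card, φ ((A.powersetCard j).sup fun T => T.inf w) := by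
  classical
  set rk : Fin n → ℕ := fun k =>
    (A.filter (fun k' => w k < w k' ∨ (w k' = w k ∧ k' ≤ k))).card with hrk
  have hself : ∀ k ∈ A, k ∈ A.filter (fun k' => w k < w k' ∨ (w k' = w k ∧ k' ≤ k)) := by
    intro k hk
    rw [Finset.mem_filter]
    exact ⟨hk, Or.inr ⟨rfl, le_refl k⟩⟩
  have hrk1 : ∀ k ∈ A, 1 ≤ rk k := by
    intro k hk
    exact Finset.card_pos.2 ⟨k, hself k hk⟩
  have hrkm : ∀ k, rk k ≤ A.card := fun k => Finset.card_le_card (Finset.filter_subset _ _)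
  have hwle : ∀ k ∈ A, w k ≤ (A.powersetCard (rk k)).sup fun T => T.inf w := by
    intro k hk
    apply le_trans ?_ (Finset.le_sup (f := fun T => T.inf w)
      (Finset.mem_powersetCard.2 ⟨Finset.filter_subset _ _, rfl⟩))
    apply Finset.le_inf
    intro k' hk'
    rw [Finset.mem_filter] at hk'
    rcases hk'.2 with h | h
    · exact le_of_lt h
    · exact h.1.symm.le
  have hkey : ∀ k1 ∈ A, ∀ k2 ∈ A,
      (w k2 < w k1 ∨ (w k1 = w k2 ∧ k1 < k2)) → rk k1 < rk k2 := by
    intro k1 hk1 k2 hk2 hcase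
    apply Finset.card_lt_card
    rw [Finset.ssubset_iff_of_subset]
    · refine ⟨k2, hself k2 hk2, ?_⟩
      rw [Finset.mem_filter]
      rintro ⟨-, h | h⟩
      · rcases hcase with hcc | hcc
        · exact absurd h (not_lt.2 (le_of_lt hcc))
        · exact absurd h (by rw [hcc.1]; exact lt_irrefl _)
      · rcases hcase with hcc | hcc
        · rw [h.1] at hcc; exact absurd hcc (lt_irrefl _)
        · exact absurd h.2 (not_le.2 hcc.2)
    · intro k' hk'
      rw [Finset.mem_filter] at hk' ⊢
      refine ⟨hk'.1, ?_⟩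
      rcases hk'.2 with h | h
      · rcases hcase with hcc | hcc
        · exact Or.inl (lt_trans hcc h)
        · exact Or.inl (hcc.1 ▸ h)
      · rcases hcase with hcc | hcc
        · exact Or.inl (by rw [h.1]; exact hcc)
        · exact Or.inr ⟨by rw [h.1, hcc.1], le_trans h.2 (le_of_lt hcc.2)⟩
  have hinj : ∀ k1 ∈ A, ∀ k2 ∈ A, rk k1 = rk k2 → k1 = k2 := by
    intro k1 hk1 k2 hk2 heq
    by_contra hne
    rcases lt_trichotomy (w k1) (w k2) with h | h | h
    · exact absurd heq (ne_of_gt (hkey k2 hk2 k1 hk1 (Or.inl h)))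
    · rcases lt_or_gt_of_ne hne with hlt | hgt
      · exact absurd heq (ne_of_lt (hkey k1 hk1 k2 hk2 (Or.inr ⟨h, hlt⟩)))
      · exact absurd heq (ne_of_gt (hkey k2 hk2 k1 hk1 (Or.inr ⟨h.symm, hgt⟩)))
    · exact absurd heq (ne_of_lt (hkey k1 hk1 k2 hk2 (Or.inl h)))
  calc ∑ k ∈ A, φ (w k)
      ≤ ∑ k ∈ A, φ ((A.powersetCard (rk k)).sup fun T => T.inf w) :=
        Finset.sum_le_sum fun k hk => hφ (hwle k hk)
    _ = ∑ j ∈ A.image rk, φ ((A.powersetCard j).sup fun T => T.inf w) :=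
        (Finset.sum_image (f := fun j => φ ((A.powersetCard j).sup fun T => T.inf w)) hinj).symm
    _ ≤ ∑ j ∈ Finset.Icc 1 A.card, φ ((A.powersetCard j).sup fun T => T.inf w) := by
        apply Finset.sum_le_sum_of_subset
        intro j hj
        rw [Finset.mem_image] at hj
        obtain ⟨k, hk, rfl⟩ := hj
        rw [Finset.mem_Icc]
        exact ⟨hrk1 k hk, hrkm k⟩


lemma sgnSum_measurable {n : ℕ} {f : Fin n → ℝ → ℝ} (hf : ∀ k, Measurable (f k))
    (ε : Fin n → Bool) : Measurable (fun t => sgnSum (fun k => f k t) ε) := by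
  unfold sgnSum
  apply Finset.measurable_sum
  intro k _
  by_cases hk : ε k = true
  · simp only [hk, if_true]
    exact hf k
  · simp only [hk, if_false]
    exact (hf k).neg

/-- Integrated order-statistic moment bound. -/
lemma orderstat_moment {n : ℕ} {f : Fin n → ℝ → ℝ} (hf : ∀ k, Measurable (f k))
    (A : Finset (Fin n)) {α lam : ℝ} (hα : 1 ≤ α) (hlam : 0 < lam)
    (hmom : ∀ ε : Fin n → Bool,
      ∫⁻ t, ENNReal.ofReal (Real.exp ((|sgnSum (fun k => f k t) ε| / lam) ^ α)) ∂mu01 ≤ 2)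
    (j r : ℕ) (hj : 1 ≤ j) (hjm : j ≤ A.card) (hr : 1 ≤ r) :
    ((j:ℝ≥0∞)) ^ (r:ℝ) * ∫⁻ x, (bfun f A j x) ^ (r:ℝ) ∂mu01 ≤
      2^j * ENNReal.ofReal (2 * lam ^ (r:ℝ) * (r:ℝ) ^ ((r:ℝ)/α)) := by
  classical
  have hrR : (0:ℝ) ≤ (r:ℝ) := by positivity
  -- pointwise bound
  have hpoint : ∀ x : ℝ, (2:ℝ≥0∞)^n * (((j:ℝ≥0∞)) ^ (r:ℝ) * (bfun f A j x) ^ (r:ℝ)) ≤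
      (2:ℝ≥0∞)^j * ∑ ε : Fin n → Bool,
        (ENNReal.ofReal |sgnSum (fun k => f k x) ε|) ^ (r:ℝ) := by
    intro x
    obtain ⟨T, hTA, hTcard, hTle⟩ := bfun_attained hj hjm x
    set σ : ℝ := ∑ k ∈ T, |f k x| with hσ
    have hσ0 : 0 ≤ σ := Finset.sum_nonneg fun k _ => abs_nonneg _
    have hb1 : ((j:ℝ≥0∞)) * bfun f A j x ≤ ENNReal.ofReal σ := by
      calc ((j:ℝ≥0∞)) * bfun f A j x = ∑ _k ∈ T, bfun f A j x := by
            rw [Finset.sum_const, hTcard, nsmul_eq_mul]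
        _ ≤ ∑ k ∈ T, ENNReal.ofReal |f k x| := Finset.sum_le_sum hTle
        _ = ENNReal.ofReal σ := (ENNReal.ofReal_sum_of_nonneg fun k _ => abs_nonneg _).symm
    have hcomb := comb r T (fun k => f k x) 0 le_rfl
    simp only [add_zero] at hcomb
    rw [hTcard, ← hσ] at hcomb
    -- hcomb : 2^n * σ^r ≤ 2^j * ∑_ε |sgnSum|^r
    calc (2:ℝ≥0∞)^n * (((j:ℝ≥0∞)) ^ (r:ℝ) * (bfun f A j x) ^ (r:ℝ))
        = (2:ℝ≥0∞)^n * (((j:ℝ≥0∞)) * bfun f A j x) ^ (r:ℝ) := by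
          rw [ENNReal.mul_rpow_of_nonneg _ _ hrR]
      _ ≤ (2:ℝ≥0∞)^n * (ENNReal.ofReal σ) ^ (r:ℝ) := by
          exact mul_le_mul_right (ENNReal.rpow_le_rpow hb1 hrR) _
      _ = ENNReal.ofReal ((2:ℝ)^n * σ^r) := by
          have h2 : ((2:ℝ≥0∞))^n = ENNReal.ofReal ((2:ℝ)^n) := by
            rw [ENNReal.ofReal_pow (by norm_num)]
            norm_num
          rw [h2, ENNReal.ofReal_rpow_of_nonneg hσ0 hrR, Real.rpow_natCast,
            ← ENNReal.ofReal_mul (by positivity : (0:ℝ) ≤ (2:ℝ)^n)]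
      _ ≤ ENNReal.ofReal ((2:ℝ)^j * ∑ ε : Fin n → Bool, |sgnSum (fun k => f k x) ε|^r) := by
          apply ENNReal.ofReal_le_ofReal
          exact hcomb
      _ = (2:ℝ≥0∞)^j * ∑ ε : Fin n → Bool,
            (ENNReal.ofReal |sgnSum (fun k => f k x) ε|) ^ (r:ℝ) := by
          have h2 : ((2:ℝ≥0∞))^j = ENNReal.ofReal ((2:ℝ)^j) := by
            rw [ENNReal.ofReal_pow (by norm_num)]
            norm_num
          rw [h2, ENNReal.ofReal_mul (by positivity : (0:ℝ) ≤ (2:ℝ)^j),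
            ENNReal.ofReal_sum_of_nonneg (fun ε _ => by positivity)]
          congr 1
          apply Finset.sum_congr rfl
          intro ε _
          rw [ENNReal.ofReal_rpow_of_nonneg (abs_nonneg _) hrR, Real.rpow_natCast]
  -- integrate
  have hbmeas : Measurable fun x => (bfun f A j x) ^ (r:ℝ) :=
    (bfun_measurable f A j hf).pow_const _
  have hgmeas : ∀ ε : Fin n → Bool,
      Measurable fun x => (ENNReal.ofReal |sgnSum (fun k => f k x) ε|) ^ (r:ℝ) := fun ε =>
    (ENNReal.measurable_ofReal.comp (sgnSum_measurable hf ε).abs).pow_const _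
  have hint : (2:ℝ≥0∞)^n * (((j:ℝ≥0∞)) ^ (r:ℝ) * ∫⁻ x, (bfun f A j x) ^ (r:ℝ) ∂mu01) ≤
      (2:ℝ≥0∞)^n * ((2:ℝ≥0∞)^j * ENNReal.ofReal (2 * lam ^ (r:ℝ) * (r:ℝ) ^ ((r:ℝ)/α))) := by
    calc (2:ℝ≥0∞)^n * (((j:ℝ≥0∞)) ^ (r:ℝ) * ∫⁻ x, (bfun f A j x) ^ (r:ℝ) ∂mu01)
        = ∫⁻ x, (2:ℝ≥0∞)^n * (((j:ℝ≥0∞)) ^ (r:ℝ) * (bfun f A j x) ^ (r:ℝ)) ∂mu01 := by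
          rw [lintegral_const_mul _ (hbmeas.const_mul _), lintegral_const_mul _ hbmeas]
      _ ≤ ∫⁻ x, (2:ℝ≥0∞)^j * ∑ ε : Fin n → Bool,
            (ENNReal.ofReal |sgnSum (fun k => f k x) ε|) ^ (r:ℝ) ∂mu01 :=
          lintegral_mono hpoint
      _ = (2:ℝ≥0∞)^j * ∑ ε : Fin n → Bool,
            ∫⁻ x, (ENNReal.ofReal |sgnSum (fun k => f k x) ε|) ^ (r:ℝ) ∂mu01 := by
          rw [lintegral_const_mul _ (by exact Finset.measurable_sum _ fun ε _ => hgmeas ε),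
            lintegral_finset_sum _ fun ε _ => hgmeas ε]
      _ ≤ (2:ℝ≥0∞)^j * ∑ _ε : Fin n → Bool,
            ENNReal.ofReal (2 * lam ^ (r:ℝ) * (r:ℝ) ^ ((r:ℝ)/α)) := by
          apply mul_le_mul_right
          apply Finset.sum_le_sum
          intro ε _
          exact moment_bound (sgnSum_measurable hf ε) hlam hα (hmom ε) r hr
      _ = (2:ℝ≥0∞)^n * ((2:ℝ≥0∞)^j * ENNReal.ofReal (2 * lam ^ (r:ℝ) * (r:ℝ) ^ ((r:ℝ)/α))) := by
          rw [Finset.sum_const, Finset.card_univ, Fintype.card_fun]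
          simp only [Fintype.card_bool, Fintype.card_fin, nsmul_eq_mul, Nat.cast_pow,
            Nat.cast_ofNat]
          ring
  exact (ENNReal.mul_le_mul_iff_right (by positivity) (by simp [ENNReal.pow_ne_top]) ).1 hint


/-- For positive real exponent `s`, `∫⁻ (bfun)^s = (eLpNorm toReal∘bfun (ofReal s))^s`. -/
lemma lintegral_bfun_eq_eLpNorm {n : ℕ} {f : Fin n → ℝ → ℝ} (hf : ∀ k, Measurable (f k))
    {A : Finset (Fin n)} {j : ℕ} (hj : 1 ≤ j) {s : ℝ} (hs : 0 < s) :
    ∫⁻ x, (bfun f A j x) ^ s ∂mu01 =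
      (eLpNorm (fun x => (bfun f A j x).toReal) (ENNReal.ofReal s) mu01) ^ s := by
  have h0 : ENNReal.ofReal s ≠ 0 := by
    simp [ENNReal.ofReal_eq_zero, not_le, hs]
  have htop : ENNReal.ofReal s ≠ ⊤ := ENNReal.ofReal_ne_top
  rw [eLpNorm_eq_lintegral_rpow_enorm_toReal h0 htop, ENNReal.toReal_ofReal (le_of_lt hs)]
  rw [← ENNReal.rpow_mul, one_div, inv_mul_cancel₀ (ne_of_gt hs), ENNReal.rpow_one]
  apply lintegral_congr
  intro x
  congr 1
  rw [Real.enorm_eq_ofReal ENNReal.toReal_nonneg, ENNReal.ofReal_toReal (bfun_ne_top hj x)]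

lemma bfun_p_moment {n : ℕ} {f : Fin n → ℝ → ℝ} (hf : ∀ k, Measurable (f k))
    (A : Finset (Fin n)) {p q α lam : ℝ} (hp : 1 < p) (hpq : p < q) (hq : q < 2)
    (hαdef : α = q / (q-1)) (hlam : 0 < lam)
    (hmom : ∀ ε : Fin n → Bool,
      ∫⁻ t, ENNReal.ofReal (Real.exp ((|sgnSum (fun k => f k t) ε| / lam) ^ α)) ∂mu01 ≤ 2)
    (j : ℕ) (hj : 1 ≤ j) (hjm : j ≤ A.card) :
    ∫⁻ x, (bfun f A j x) ^ p ∂mu01 ≤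
      ENNReal.ofReal ((4*lam)^p * (j:ℝ)^(-(p/q))) := by
  have hq1 : 1 < q := lt_trans hp hpq
  have hq1' : 0 < q - 1 := by linarith
  have hα1 : 1 ≤ α := by
    rw [hαdef, le_div_iff₀ hq1']
    linarith
  have hαpos : 0 < α := by linarith
  have hp0 : 0 < p := by linarith
  have hinvα : 1/α = 1 - 1/q := by
    rw [hαdef]
    field_simp
  set r : ℕ := max j 2 with hrdef
  have hr2 : 2 ≤ r := le_max_right _ _
  have hr1 : 1 ≤ r := by omega
  have hjr : j ≤ r := le_max_left _ _
  have hrpos : (0:ℝ) < (r:ℝ) := by positivity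
  have hjposR : (0:ℝ) < (j:ℝ) := by exact_mod_cast hj
  have hpr : p ≤ (r:ℝ) := by
    have : (2:ℝ) ≤ (r:ℝ) := by exact_mod_cast hr2
    linarith
  -- order statistic moment bound
  have h_os := orderstat_moment hf A hα1 hlam hmom j r hj hjm hr1
  -- convert to ofReal form and divide
  set c : ℝ := (2:ℝ)^j * (2 * lam ^ (r:ℝ) * (r:ℝ) ^ ((r:ℝ)/α)) with hc
  have hcpos : 0 < c := by
    rw [hc]; positivity
  have hX : ∫⁻ x, (bfun f A j x) ^ (r:ℝ) ∂mu01 ≤ ENNReal.ofReal (c / (j:ℝ)^(r:ℝ)) := by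
    have hj1 : ((j:ℝ≥0∞)) ^ (r:ℝ) = ENNReal.ofReal ((j:ℝ)^(r:ℝ)) := by
      rw [← ENNReal.ofReal_natCast j, ENNReal.ofReal_rpow_of_pos hjposR]
    have hj2 : ((2:ℝ≥0∞))^j = ENNReal.ofReal ((2:ℝ)^j) := by
      rw [ENNReal.ofReal_pow (by norm_num)]
      norm_num
    rw [hj1, hj2] at h_os
    rw [← ENNReal.ofReal_mul (by positivity)] at h_os
    rw [ENNReal.ofReal_div_of_pos (by positivity)]
    rw [ENNReal.le_div_iff_mul_le (Or.inl (ENNReal.ofReal_pos.2 (by positivity)).ne')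
      (Or.inl ENNReal.ofReal_ne_top)]
    rw [mul_comm]
    exact h_os
  -- Jensen / exponent monotonicity
  have hjen : ∫⁻ x, (bfun f A j x) ^ p ∂mu01 ≤
      (∫⁻ x, (bfun f A j x) ^ (r:ℝ) ∂mu01) ^ (p / (r:ℝ)) := by
    have hmono := eLpNorm_le_eLpNorm_of_exponent_le
      (ENNReal.ofReal_le_ofReal hpr)
      (μ := mu01) (f := fun x => (bfun f A j x).toReal)
      ((ENNReal.measurable_toReal.comp (bfun_measurable f A j hf)).aestronglyMeasurable)
    have h1 := lintegral_bfun_eq_eLpNorm hf (A := A) hj (s := p) hp0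
    have h2 := lintegral_bfun_eq_eLpNorm hf (A := A) hj (s := (r:ℝ)) hrpos
    rw [h1]
    calc (eLpNorm (fun x => (bfun f A j x).toReal) (ENNReal.ofReal p) mu01) ^ p
        ≤ (eLpNorm (fun x => (bfun f A j x).toReal) (ENNReal.ofReal (r:ℝ)) mu01) ^ p :=
          ENNReal.rpow_le_rpow hmono (le_of_lt hp0)
      _ = ((eLpNorm (fun x => (bfun f A j x).toReal) (ENNReal.ofReal (r:ℝ)) mu01) ^ (r:ℝ))
            ^ (p / (r:ℝ)) := by
          rw [← ENNReal.rpow_mul]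
          congr 1
          field_simp
      _ = (∫⁻ x, (bfun f A j x) ^ (r:ℝ) ∂mu01) ^ (p / (r:ℝ)) := by rw [h2]
  -- real constant computation
  have hRR : (c / (j:ℝ)^(r:ℝ)) ^ (p/(r:ℝ)) ≤ (4*lam)^p * (j:ℝ)^(-(p/q)) := by
    have h4p : ((4:ℝ)*lam)^p = (2:ℝ)^p * (2:ℝ)^p * lam^p := by
      rw [show (4:ℝ)*lam = 2*(2*lam) by ring, Real.mul_rpow (by norm_num) (by positivity),
        Real.mul_rpow (by norm_num) (by positivity)]
      ring
    have hpα : (2:ℝ)^(p/α) ≤ (2:ℝ)^p := by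
      rw [Real.rpow_le_rpow_left_iff (by norm_num : (1:ℝ) < 2)]
      exact div_le_self (le_of_lt hp0) hα1
    rcases Nat.lt_or_ge j 2 with hj2 | hj2
    · -- j = 1, r = 2
      have hj1 : j = 1 := by omega
      subst hj1
      have hr2' : r = 2 := by rw [hrdef]; rfl
      rw [hc, hr2']
      push_cast
      rw [Real.one_rpow, div_one, Real.one_rpow, mul_one]
      have hexp : ((2:ℝ)^(1:ℕ) * (2 * lam ^ (2:ℝ) * (2:ℝ) ^ ((2:ℝ)/α))) ^ (p/(2:ℝ))
          = (2:ℝ)^p * lam^p * (2:ℝ)^(p/α) := by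
        rw [pow_one]
        rw [show (2:ℝ) * (2 * lam ^ (2:ℝ) * (2:ℝ) ^ ((2:ℝ)/α))
            = ((2:ℝ)^(2:ℝ)) * (lam ^ (2:ℝ) * (2:ℝ) ^ ((2:ℝ)/α)) by
          rw [show (2:ℝ)^(2:ℝ) = 4 by
            rw [show (2:ℝ) = ((2:ℕ):ℝ) by norm_num, Real.rpow_natCast]; norm_num]
          ring]
        rw [Real.mul_rpow (by positivity) (by positivity),
          Real.mul_rpow (by positivity) (by positivity)]
        rw [← Real.rpow_mul (by norm_num : (0:ℝ) ≤ 2), ← Real.rpow_mul (le_of_lt hlam),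
          ← Real.rpow_mul (by norm_num : (0:ℝ) ≤ 2)]
        rw [show (2:ℝ) * (p/2) = p by ring, show (2:ℝ)/α * (p/2) = p/α by ring]
        ring
      rw [hexp, h4p]
      nlinarith [hpα, Real.rpow_nonneg (show (0:ℝ) ≤ 2 by norm_num) p,
        Real.rpow_nonneg (le_of_lt hlam) p,
        mul_le_mul_of_nonneg_left hpα (mul_nonneg
          (Real.rpow_nonneg (show (0:ℝ) ≤ 2 by norm_num) p)
          (Real.rpow_nonneg (le_of_lt hlam) p))]
    · -- j ≥ 2, r = j
      have hrj : r = j := max_eq_left hj2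
      have hcast : ((r:ℕ):ℝ) = (j:ℝ) := by rw [hrj]
      rw [hc, hcast]
      have hJ1 : (1:ℝ) ≤ (j:ℝ) := by exact_mod_cast hj
      have hJα : (j:ℝ)/α - (j:ℝ) = -((j:ℝ)/q) := by
        rw [div_eq_mul_one_div, hinvα]
        ring
      have hbase : (2:ℝ)^j * (2 * lam^((j:ℝ)) * (j:ℝ)^((j:ℝ)/α)) / (j:ℝ)^((j:ℝ))
          = (2:ℝ)^((j:ℝ)+1) * lam^((j:ℝ)) * (j:ℝ)^(-((j:ℝ)/q)) := by
        rw [← hJα, Real.rpow_sub hjposR, Real.rpow_add (by norm_num : (0:ℝ)<2),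
          Real.rpow_one, ← Real.rpow_natCast 2 j]
        field_simp
      rw [hbase]
      rw [Real.mul_rpow (by positivity) (by positivity),
        Real.mul_rpow (by positivity) (by positivity)]
      rw [← Real.rpow_mul (by norm_num : (0:ℝ) ≤ 2), ← Real.rpow_mul (le_of_lt hlam),
        ← Real.rpow_mul (le_of_lt hjposR)]
      rw [show (j:ℝ) * (p/(j:ℝ)) = p by field_simp,
        show (-((j:ℝ)/q)) * (p/(j:ℝ)) = -(p/q) by field_simp]
      have h2 : (2:ℝ)^(((j:ℝ)+1) * (p/(j:ℝ))) ≤ (2:ℝ)^p * (2:ℝ)^p := by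
        rw [← Real.rpow_add (by norm_num : (0:ℝ)<2)]
        rw [Real.rpow_le_rpow_left_iff (by norm_num : (1:ℝ) < 2)]
        rw [mul_div_assoc']
        rw [div_le_iff₀ hjposR]
        nlinarith [hp0, hJ1]
      rw [h4p]
      have hrest : (0:ℝ) ≤ lam^p * (j:ℝ)^(-(p/q)) := by positivity
      calc (2:ℝ)^(((j:ℝ)+1) * (p/(j:ℝ))) * lam^p * (j:ℝ)^(-(p/q))
          = (2:ℝ)^(((j:ℝ)+1) * (p/(j:ℝ))) * (lam^p * (j:ℝ)^(-(p/q))) := by ring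
        _ ≤ ((2:ℝ)^p * (2:ℝ)^p) * (lam^p * (j:ℝ)^(-(p/q))) :=
            mul_le_mul_of_nonneg_right h2 hrest
        _ = (2:ℝ)^p * (2:ℝ)^p * lam^p * (j:ℝ)^(-(p/q)) := by ring
  calc ∫⁻ x, (bfun f A j x) ^ p ∂mu01
      ≤ (∫⁻ x, (bfun f A j x) ^ (r:ℝ) ∂mu01) ^ (p / (r:ℝ)) := hjen
    _ ≤ (ENNReal.ofReal (c / (j:ℝ)^(r:ℝ))) ^ (p / (r:ℝ)) :=
        ENNReal.rpow_le_rpow hX (by positivity)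
    _ = ENNReal.ofReal ((c / (j:ℝ)^(r:ℝ)) ^ (p/(r:ℝ))) :=
        ENNReal.ofReal_rpow_of_pos (by positivity)
    _ ≤ ENNReal.ofReal ((4*lam)^p * (j:ℝ)^(-(p/q))) := ENNReal.ofReal_le_ofReal hRR


/-- The core quantitative estimate: the weak-ℓq norm of the `L^p` norms is controlled by
`lam` when the exponential moments of all signed sums are bounded. -/
lemma key_estimate {n : ℕ} {f : Fin n → ℝ → ℝ} (hf : ∀ k, Measurable (f k))
    {p q lam : ℝ} (hp : 1 < p) (hpq : p < q) (hq : q < 2) (hlam : 0 < lam)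
    (hmom : ∀ ε : Fin n → Bool,
      ∫⁻ t, ENNReal.ofReal
        (Real.exp ((|sgnSum (fun k => f k t) ε| / lam) ^ (q/(q-1)))) ∂mu01 ≤ 2) :
    weakLq q (fun k => (eLpNorm (f k) (ENNReal.ofReal p) mu01).toReal) ≤
      4 * lam * (q/(q-p)) ^ (1/p) := by
  classical
  have hp0 : (0:ℝ) < p := by linarith
  have hq0 : (0:ℝ) < q := by linarith
  have hqp : (0:ℝ) < q - p := by linarith
  have hK0 : (0:ℝ) < q/(q-p) := by positivity
  have hθ0 : (0:ℝ) < p/q := by positivity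
  have hθ1 : p/q < 1 := by
    rw [div_lt_one hq0]; exact hpq
  set a : Fin n → ℝ := fun k => (eLpNorm (f k) (ENNReal.ofReal p) mu01).toReal with ha
  rw [weakLq]
  apply Real.iSup_le _ (by positivity)
  rintro ⟨t, ht⟩
  have htpos : (0:ℝ) < t := ht
  set A : Finset (Fin n) := Finset.univ.filter (fun k => t < |a k|) with hA
  have hcard : (Nat.card {k : Fin n // t < |a k|} : ℝ) = (A.card : ℝ) := by
    rw [Nat.card_eq_fintype_card, Fintype.card_subtype]
  set m := A.card with hm
  rcases Nat.eq_zero_or_pos m with hm0 | hm1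
  · simp only
    rw [hcard, hm0]
    rw [Nat.cast_zero, Real.zero_rpow (by positivity : 1/q ≠ 0), mul_zero]
    positivity
  · have hmpos : (0:ℝ) < (m:ℝ) := by exact_mod_cast hm1
    -- (i) each k in A has large p-integral
    have hAk : ∀ k ∈ A, (ENNReal.ofReal t) ^ p ≤
        ∫⁻ x, (ENNReal.ofReal |f k x|) ^ p ∂mu01 := by
      intro k hk
      rw [hA, Finset.mem_filter] at hk
      have hak : t < a k := by
        have := hk.2
        rwa [abs_of_nonneg ENNReal.toReal_nonneg] at this
      set E := eLpNorm (f k) (ENNReal.ofReal p) mu01 with hE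
      have hEne : E ≠ ⊤ := by
        intro hEtop
        have hz : a k = 0 := by rw [ha]; simp only [← hE, hEtop, ENNReal.toReal_top]
        rw [hz] at hak
        linarith
      have h1 : ENNReal.ofReal t < E :=
        (ENNReal.ofReal_lt_iff_lt_toReal (le_of_lt htpos) hEne).2 hak
      have hne0 : ENNReal.ofReal p ≠ 0 := by
        simp [ENNReal.ofReal_eq_zero, not_le]; linarith
      have h2 : E = (∫⁻ x, ‖f k x‖ₑ ^ p ∂mu01) ^ (1/p) := by
        rw [hE, eLpNorm_eq_lintegral_rpow_enorm_toReal hne0 ENNReal.ofReal_ne_top,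
          ENNReal.toReal_ofReal (le_of_lt hp0)]
      have h3 : (∫⁻ x, ‖f k x‖ₑ ^ p ∂mu01) =
          ∫⁻ x, (ENNReal.ofReal |f k x|) ^ p ∂mu01 := by
        apply lintegral_congr
        intro x
        rw [← ofReal_norm, Real.norm_eq_abs]
      calc (ENNReal.ofReal t) ^ p ≤ E ^ p := ENNReal.rpow_le_rpow (le_of_lt h1) (le_of_lt hp0)
        _ = ((∫⁻ x, ‖f k x‖ₑ ^ p ∂mu01) ^ (1/p)) ^ p := by rw [h2]
        _ = ∫⁻ x, (ENNReal.ofReal |f k x|) ^ p ∂mu01 := by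
            rw [← ENNReal.rpow_mul, one_div, inv_mul_cancel₀ (ne_of_gt hp0),
              ENNReal.rpow_one, h3]
    -- (ii)-(iv) chain
    have hφ : Monotone (fun z : ℝ≥0∞ => z ^ p) := fun x y hxy =>
      ENNReal.rpow_le_rpow hxy (le_of_lt hp0)
    have hmono2 : ∀ x : ℝ, ∑ k ∈ A, (ENNReal.ofReal |f k x|) ^ p ≤
        ∑ j ∈ Finset.Icc 1 m, (bfun f A j x) ^ p := by
      intro x
      exact sum_le_sum_orderstat A (fun k => ENNReal.ofReal |f k x|) (fun z => z ^ p) hφ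
    have hsum : (m:ℝ≥0∞) * (ENNReal.ofReal t) ^ p ≤
        ENNReal.ofReal ((4*lam)^p * ((1/(1-p/q)) * (m:ℝ) ^ (1-p/q))) := by
      calc (m:ℝ≥0∞) * (ENNReal.ofReal t) ^ p
          = ∑ _k ∈ A, (ENNReal.ofReal t) ^ p := by rw [Finset.sum_const, hm, nsmul_eq_mul]
        _ ≤ ∑ k ∈ A, ∫⁻ x, (ENNReal.ofReal |f k x|) ^ p ∂mu01 := Finset.sum_le_sum hAk
        _ = ∫⁻ x, ∑ k ∈ A, (ENNReal.ofReal |f k x|) ^ p ∂mu01 :=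
            (lintegral_finset_sum A (fun k _ =>
              (ENNReal.measurable_ofReal.comp (hf k).abs).pow_const p)).symm
        _ ≤ ∫⁻ x, ∑ j ∈ Finset.Icc 1 m, (bfun f A j x) ^ p ∂mu01 := lintegral_mono hmono2
        _ = ∑ j ∈ Finset.Icc 1 m, ∫⁻ x, (bfun f A j x) ^ p ∂mu01 :=
            lintegral_finset_sum _ (fun j _ => (bfun_measurable f A j hf).pow_const p)
        _ ≤ ∑ j ∈ Finset.Icc 1 m, ENNReal.ofReal ((4*lam)^p * (j:ℝ) ^ (-(p/q))) := by
            apply Finset.sum_le_sum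
            intro j hj
            rw [Finset.mem_Icc] at hj
            exact bfun_p_moment hf A hp hpq hq rfl hlam hmom j hj.1 hj.2
        _ = ENNReal.ofReal ((4*lam)^p) *
              ∑ j ∈ Finset.Icc 1 m, ENNReal.ofReal ((j:ℝ) ^ (-(p/q))) := by
            rw [Finset.mul_sum]
            apply Finset.sum_congr rfl
            intro j _
            rw [← ENNReal.ofReal_mul (by positivity)]
        _ = ENNReal.ofReal ((4*lam)^p) *
              ENNReal.ofReal (∑ j ∈ Finset.Icc 1 m, (j:ℝ) ^ (-(p/q))) := by
            rw [ENNReal.ofReal_sum_of_nonneg]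
            intro j _
            exact Real.rpow_nonneg (Nat.cast_nonneg j) _
        _ ≤ ENNReal.ofReal ((4*lam)^p) *
              ENNReal.ofReal ((1/(1-p/q)) * (m:ℝ) ^ (1-p/q)) := by
            apply mul_le_mul_right
            exact ENNReal.ofReal_le_ofReal (sum_rpow_neg_le hθ0 hθ1 m hm1)
        _ = ENNReal.ofReal ((4*lam)^p * ((1/(1-p/q)) * (m:ℝ) ^ (1-p/q))) := by
            rw [← ENNReal.ofReal_mul (by positivity)]
    -- (v) to the reals
    have hLHS : (m:ℝ≥0∞) * (ENNReal.ofReal t) ^ p = ENNReal.ofReal ((m:ℝ) * t ^ p) := by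
      rw [ENNReal.ofReal_mul (by positivity), ENNReal.ofReal_rpow_of_pos htpos,
        ENNReal.ofReal_natCast]
    have hreal : (m:ℝ) * t ^ p ≤ (4*lam)^p * ((1/(1-p/q)) * (m:ℝ) ^ (1-p/q)) := by
      rw [hLHS] at hsum
      have h1θ : (0:ℝ) < 1 - p/q := by linarith
      exact (ENNReal.ofReal_le_ofReal_iff (by positivity)).1 hsum
    -- (vi) real algebra
    simp only
    rw [hcard]
    have hKeq : (1:ℝ)/(1-p/q) = q/(q-p) := by
      rw [show (1:ℝ) - p/q = (q-p)/q by field_simp]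
      rw [one_div_div]
    rw [hKeq] at hreal
    have hmsplit : (m:ℝ) = (m:ℝ) ^ (p/q) * (m:ℝ) ^ (1-p/q) := by
      rw [← Real.rpow_add hmpos]
      norm_num
    have hstep : t ^ p * (m:ℝ) ^ (p/q) ≤ (4*lam)^p * (q/(q-p)) := by
      have hpow : (0:ℝ) < (m:ℝ) ^ (1-p/q) := Real.rpow_pos_of_pos hmpos _
      rw [← mul_le_mul_iff_left₀ hpow]
      calc t ^ p * (m:ℝ) ^ (p/q) * (m:ℝ) ^ (1-p/q) = (m:ℝ) * t ^ p := by
            rw [mul_assoc, ← hmsplit]; ring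
        _ ≤ (4*lam)^p * (q/(q-p)) * (m:ℝ) ^ (1-p/q) := by
            calc (m:ℝ) * t ^ p ≤ (4*lam)^p * ((q/(q-p)) * (m:ℝ) ^ (1-p/q)) := hreal
              _ = (4*lam)^p * (q/(q-p)) * (m:ℝ) ^ (1-p/q) := by ring
    have hfin : (t * (m:ℝ) ^ (1/q)) ^ p ≤ ((4*lam) * (q/(q-p)) ^ (1/p)) ^ p := by
      rw [Real.mul_rpow (le_of_lt htpos) (Real.rpow_nonneg hmpos.le _),
        Real.mul_rpow (by positivity) (by positivity),
        ← Real.rpow_mul (le_of_lt (Nat.cast_pos.2 hm1)),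
        ← Real.rpow_mul (by positivity : (0:ℝ) ≤ q/(q-p))]
      rw [show (1/q) * p = p/q by ring, show (1/p) * p = 1 by field_simp, Real.rpow_one]
      exact hstep
    have h1 : t * (m:ℝ) ^ (1/q) ≤ (4*lam) * (q/(q-p)) ^ (1/p) := by
      have h2 := Real.rpow_le_rpow (Real.rpow_nonneg (mul_nonneg htpos.le (Real.rpow_nonneg hmpos.le _)) _) hfin (by positivity : (0:ℝ) ≤ 1/p)
      rw [show (1:ℝ)/p = p⁻¹ from one_div p] at h2
      rwa [Real.rpow_rpow_inv (mul_nonneg htpos.le (Real.rpow_nonneg hmpos.le _)) (ne_of_gt hp0),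
        Real.rpow_rpow_inv (by positivity) (ne_of_gt hp0), show p⁻¹ = (1:ℝ)/p from
        (one_div p).symm] at h2
    exact h1


/-- Theorem: for `1 < p < q < 2` and `q' = q/(q-1)`, the inclusion
`Exp L^{q'} ⊂ L^p` is `(ℓ^{q,∞},1)`-absolutely summing. -/
theorem expL_subset_Lp_weak_lq_summing (p q : ℝ) (hp : 1 < p) (hpq : p < q) (hq : q < 2) :
    ∃ C : ℝ, 0 < C ∧ ∀ (n : ℕ) (f : Fin n → ℝ → ℝ),
      (∀ k, Measurable (f k)) → (∀ k, expLNorm (q / (q - 1)) (f k) ≠ ⊤) →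
      ENNReal.ofReal
          (weakLq q fun k => (eLpNorm (f k) (ENNReal.ofReal p) mu01).toReal) ≤
        ENNReal.ofReal C *
          ⨆ ε : Fin n → ({-1, 1} : Set ℝ),
            expLNorm (q / (q - 1)) (fun s => ∑ k, (ε k : ℝ) * f k s) := by
  classical
  have hq1 : 1 < q := lt_trans hp hpq
  have hq1' : (0:ℝ) < q - 1 := by linarith
  have hp0 : (0:ℝ) < p := by linarith
  have hqp : (0:ℝ) < q - p := by linarith
  have hα1 : 1 ≤ q/(q-1) := by
    rw [le_div_iff₀ hq1']
    linarith
  have hCpos : (0:ℝ) < 8 * (q/(q-p)) ^ (1/p) + 1 := by positivity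
  refine ⟨8 * (q/(q-p)) ^ (1/p) + 1, hCpos, ?_⟩
  intro n f hmeas _hfin
  set S := ⨆ ε : Fin n → ({-1, 1} : Set ℝ),
      expLNorm (q / (q - 1)) (fun s => ∑ k, (ε k : ℝ) * f k s) with hS
  -- bridge from boolean sign patterns to the ±1-valued suprema
  have hGle : ∀ ε : Fin n → Bool,
      expLNorm (q / (q - 1)) (fun t => sgnSum (fun k => f k t) ε) ≤ S := by
    intro ε
    set ε' : Fin n → ({-1, 1} : Set ℝ) := fun k =>
      if ε k then ⟨1, by norm_num⟩ else ⟨-1, by norm_num⟩ with hε'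
    have heq : (fun s => ∑ k, ((ε' k : ℝ)) * f k s) =
        fun t => sgnSum (fun k => f k t) ε := by
      funext s
      rw [sgnSum]
      apply Finset.sum_congr rfl
      intro k _
      by_cases h : ε k = true
      · simp [hε', h]
      · simp [hε', h]
    rw [hS, ← heq]
    exact le_iSup (fun ε'' : Fin n → ({-1, 1} : Set ℝ) =>
      expLNorm (q / (q - 1)) (fun s => ∑ k, ((ε'' k : ℝ)) * f k s)) ε'
  rcases eq_or_ne S ⊤ with hStop | hSne
  · rw [hStop, ENNReal.mul_top (by
      simp only [ne_eq, ENNReal.ofReal_eq_zero, not_le]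
      positivity)]
    exact le_top
  set M := S.toReal with hM
  have hSM : S = ENNReal.ofReal M := (ENNReal.ofReal_toReal hSne).symm
  rcases le_or_gt M 0 with hM0 | hMpos
  · -- degenerate case : S = 0, all functions vanish a.e.
    have hS0 : S = 0 := by rw [hSM, ENNReal.ofReal_eq_zero.2 hM0]
    have hzero : ∀ ε : Fin n → Bool,
        (fun t => sgnSum (fun k => f k t) ε) =ᵐ[mu01] 0 := by
      intro ε
      apply expLNorm_eq_zero_ae hα1 (sgnSum_measurable hmeas ε)
      exact le_antisymm (hS0 ▸ hGle ε) zero_le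
    have hfk : ∀ k, f k =ᵐ[mu01] 0 := by
      intro k
      have h1 := hzero (fun _ => true)
      have h2 := hzero (Function.update (fun _ => true) k (!(true)))
      filter_upwards [h1, h2] with x hx1 hx2
      have e1 : sgnSum (fun k' => f k' x) (fun _ => true) =
          sgnSum (Function.update (fun k' => f k' x) k 0) (fun _ => true) + f k x := by
        have := sgnSum_update (fun k' => f k' x) (fun _ => true) k
        simpa using this
      have e2 : sgnSum (fun k' => f k' x) (Function.update (fun _ => true) k (!(true))) =
          sgnSum (Function.update (fun k' => f k' x) k 0) (fun _ => true) - f k x := by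
        have := sgnSum_flip (fun k' => f k' x) (fun _ => true) k
        simpa using this
      have hx1' : sgnSum (fun k' => f k' x) (fun _ => true) = 0 := hx1
      have hx2' : sgnSum (fun k' => f k' x)
          (Function.update (fun _ => true) k (!(true))) = 0 := hx2
      rw [hx1'] at e1
      rw [hx2'] at e2
      have : f k x = 0 := by linarith
      simpa using this
    have ha0 : ∀ k, (eLpNorm (f k) (ENNReal.ofReal p) mu01).toReal = 0 := by
      intro k
      rw [eLpNorm_congr_ae (hfk k), eLpNorm_zero]
      simp
    have hw0 : weakLq q (fun k => (eLpNorm (f k) (ENNReal.ofReal p) mu01).toReal) ≤ 0 := by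
      rw [weakLq]
      apply Real.iSup_le _ le_rfl
      rintro ⟨t, ht⟩
      have htpos : (0:ℝ) < t := ht
      have hempt : IsEmpty {k : Fin n //
          t < |(eLpNorm (f k) (ENNReal.ofReal p) mu01).toReal|} := by
        constructor
        rintro ⟨k, hk⟩
        rw [ha0 k] at hk
        simp only [abs_zero] at hk
        linarith
      rw [@Nat.card_of_isEmpty _ hempt]
      simp only [Nat.cast_zero]
      rw [Real.zero_rpow (by positivity : 1/q ≠ 0), mul_zero]
    calc ENNReal.ofReal (weakLq q fun k => (eLpNorm (f k) (ENNReal.ofReal p) mu01).toReal)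
        ≤ ENNReal.ofReal 0 := ENNReal.ofReal_le_ofReal hw0
      _ = 0 := ENNReal.ofReal_zero
      _ ≤ _ := zero_le
  · -- main case
    set lam := 2 * M with hlam
    have hlampos : (0:ℝ) < lam := by rw [hlam]; linarith
    have hvalid : ∀ ε : Fin n → Bool,
        ∫⁻ t, ENNReal.ofReal
          (Real.exp ((|sgnSum (fun k => f k t) ε| / lam) ^ (q/(q-1))) - 1) ∂mu01 ≤ 1 := by
      intro ε
      apply expLNorm_valid (by linarith : (0:ℝ) ≤ q/(q-1)) hlampos
      calc expLNorm (q/(q-1)) (fun t => sgnSum (fun k => f k t) ε) ≤ S := hGle ε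
        _ = ENNReal.ofReal M := hSM
        _ < ENNReal.ofReal lam := by
            rw [ENNReal.ofReal_lt_ofReal_iff hlampos]
            rw [hlam]; linarith
    have hmom : ∀ ε : Fin n → Bool,
        ∫⁻ t, ENNReal.ofReal
          (Real.exp ((|sgnSum (fun k => f k t) ε| / lam) ^ (q/(q-1)))) ∂mu01 ≤ 2 :=
      fun ε => exp_integral_le_two (sgnSum_measurable hmeas ε) (hvalid ε)
    have hkey := key_estimate hmeas hp hpq hq hlampos hmom
    calc ENNReal.ofReal (weakLq q fun k => (eLpNorm (f k) (ENNReal.ofReal p) mu01).toReal)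
        ≤ ENNReal.ofReal (4 * lam * (q/(q-p)) ^ (1/p)) := ENNReal.ofReal_le_ofReal hkey
      _ = ENNReal.ofReal ((8 * (q/(q-p)) ^ (1/p)) * M) := by
          rw [hlam]; ring_nf
      _ = ENNReal.ofReal (8 * (q/(q-p)) ^ (1/p)) * ENNReal.ofReal M := by
          rw [ENNReal.ofReal_mul (by positivity)]
      _ ≤ ENNReal.ofReal (8 * (q/(q-p)) ^ (1/p) + 1) * S := by
          rw [hSM]
          exact mul_le_mul_left (ENNReal.ofReal_le_ofReal (by linarith)) _
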